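/- (Cross-term summability for Lorentzians at intermediate frequencies.) There exist s ∈ (1/4, 1/2), η > 0, and a constant C > 0 such that for every γ ∈ (0, 1), ∑ over pairs of integers (n, m) with γ^{−1/2+η} < n < m < γ^{−1/2−η} of the quantity ∫_ℝ (1 + ξ²)^{−s} L_{γ,n}(ξ) L_{γ,m}(ξ) dξ is at most C. -/

import Mathlib

open MeasureTheory

/-- The Lorentzian `L_{γ,n}(ξ) = γn² / ((ξ+n²)² + (γn²)²)`. -/
noncomputable def lorentzian (γ : ℝ) (n : ℤ) (ξ : ℝ) : ℝ :=
  γ * (n:ℝ)^2 / ((ξ + (n:ℝ)^2)^2 + (γ * (n:ℝ)^2)^2)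

section aux

open Real Finset

/-- rewrite a Cauchy kernel in terms of `(1 + x²)⁻¹`. -/
lemma cauchy_eq {a : ℝ} (c : ℝ) (ha : 0 < a) :
    (fun ξ : ℝ => a / ((ξ + c)^2 + a^2)) =
      fun ξ : ℝ => a⁻¹ * (1 + (a⁻¹ * (ξ + c))^2)⁻¹ := by
  funext ξ
  have h1 : (ξ + c)^2 + a^2 ≠ 0 := by positivity
  have h2 : 1 + (a⁻¹ * (ξ + c))^2 ≠ 0 := by positivity
  field_simp
  ring

lemma cauchy_integrable {a : ℝ} (c : ℝ) (ha : 0 < a) :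
    Integrable (fun ξ : ℝ => a / ((ξ + c)^2 + a^2)) := by
  rw [cauchy_eq c ha]
  have h1 : Integrable (fun x : ℝ => (1 + (a⁻¹ * x)^2)⁻¹) :=
    integrable_inv_one_add_sq.comp_mul_left' (inv_ne_zero ha.ne')
  exact ((h1.comp_add_right c).const_mul _)

lemma cauchy_integral {a : ℝ} (c : ℝ) (ha : 0 < a) :
    ∫ ξ : ℝ, a / ((ξ + c)^2 + a^2) = π := by
  rw [cauchy_eq c ha]
  rw [MeasureTheory.integral_const_mul]
  have h1 : ∫ ξ : ℝ, (1 + (a⁻¹ * (ξ + c))^2)⁻¹ = ∫ x : ℝ, (1 + (a⁻¹ * x)^2)⁻¹ :=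
    integral_add_right_eq_self (fun x : ℝ => (1 + (a⁻¹ * x)^2)⁻¹) c
  rw [h1]
  have h2 := MeasureTheory.Measure.integral_comp_mul_left
    (fun y : ℝ => (1 + y^2)⁻¹) a⁻¹
  simp only [inv_inv] at h2
  rw [h2, integral_univ_inv_one_add_sq, smul_eq_mul, abs_of_pos ha]
  field_simp

lemma lorentzian_pos_aux {γ : ℝ} (hγ : 0 < γ) {n : ℤ} (hn : 1 ≤ n) :
    0 < γ * (n:ℝ)^2 := by
  have h1 : (1:ℝ) ≤ (n:ℝ) := by exact_mod_cast hn
  have h2 : (0:ℝ) < (n:ℝ) := by linarith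
  positivity

lemma lorentzian_integrable {γ : ℝ} (hγ : 0 < γ) {n : ℤ} (hn : 1 ≤ n) :
    Integrable (lorentzian γ n) :=
  cauchy_integrable ((n:ℝ)^2) (lorentzian_pos_aux hγ hn)

lemma lorentzian_integral {γ : ℝ} (hγ : 0 < γ) {n : ℤ} (hn : 1 ≤ n) :
    ∫ ξ : ℝ, lorentzian γ n ξ = π :=
  cauchy_integral ((n:ℝ)^2) (lorentzian_pos_aux hγ hn)

lemma lorentzian_nonneg {γ : ℝ} (hγ : 0 < γ) (n : ℤ) (ξ : ℝ) :
    0 ≤ lorentzian γ n ξ := by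
  unfold lorentzian
  positivity

/-- the abstract product bound for two Cauchy kernels. -/
lemma prod_bound_real {γ N M A B : ℝ} (hγ : 0 < γ) (hN : 0 < N) (hM : 0 < M)
    (hA : 0 < A) (hB : 0 < B)
    (hD : 0 < M^2 - N^2) (key : (M^2 - N^2)^2 ≤ 2*(A+B)) :
    (γ*N^2/A) * (γ*M^2/B) ≤ 2*γ/(M^2-N^2)^2 * (M^2*(γ*N^2/A) + N^2*(γ*M^2/B)) := by
  have hD2 : 0 < (M^2-N^2)^2 := by positivity
  have e1 : (γ*N^2/A) * (γ*M^2/B) = (γ^2*N^2*M^2)/(A*B) := by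
    field_simp
  have e2 : 2*γ/(M^2-N^2)^2 * (M^2*(γ*N^2/A) + N^2*(γ*M^2/B))
      = (γ^2*N^2*M^2)/(A*B) * (2*(A+B)/(M^2-N^2)^2) := by
    field_simp; ring
  rw [e1, e2]
  refine le_mul_of_one_le_right (by positivity) ?_
  rw [le_div_iff₀ hD2]
  linarith

/-- key per-term bound. -/
lemma term_bound {γ : ℝ} (hγ : 0 < γ) {s : ℝ} (hs : 0 ≤ s) {n m : ℤ}
    (hn : 1 ≤ n) (hnm : n < m) :
    ∫ ξ : ℝ, (1 + ξ^2) ^ (-s) * (lorentzian γ n ξ * lorentzian γ m ξ)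
      ≤ 4 * π * γ / ((m:ℝ) - (n:ℝ))^2 := by
  have hm : 1 ≤ m := hn.trans hnm.le
  have hN1 : (1:ℝ) ≤ (n:ℝ) := by exact_mod_cast hn
  have hM1 : (1:ℝ) ≤ (m:ℝ) := by exact_mod_cast hm
  have hNM : (n:ℝ) < (m:ℝ) := by exact_mod_cast hnm
  have hN0 : (0:ℝ) < (n:ℝ) := lt_of_lt_of_le one_pos hN1
  have hM0 : (0:ℝ) < (m:ℝ) := lt_of_lt_of_le one_pos hM1
  have hD0 : 0 < (m:ℝ)^2 - (n:ℝ)^2 := by nlinarith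
  have hD2 : 0 < ((m:ℝ)^2 - (n:ℝ)^2)^2 := by positivity
  have haN : 0 < γ * (n:ℝ)^2 := lorentzian_pos_aux hγ hn
  have haM : 0 < γ * (m:ℝ)^2 := lorentzian_pos_aux hγ hm
  set D : ℝ := (m:ℝ)^2 - (n:ℝ)^2 with hD
  -- the dominating function
  set g : ℝ → ℝ := fun ξ =>
    (2*γ/D^2) * ((m:ℝ)^2 * lorentzian γ n ξ + (n:ℝ)^2 * lorentzian γ m ξ) with hg
  have hInt_n : Integrable (lorentzian γ n) := lorentzian_integrable hγ hn
  have hInt_m : Integrable (lorentzian γ m) := lorentzian_integrable hγ hm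
  have hg_int : Integrable g :=
    (((hInt_n.const_mul _).add (hInt_m.const_mul _)).const_mul _)
  have hpt : ∀ ξ : ℝ, (1 + ξ^2) ^ (-s) * (lorentzian γ n ξ * lorentzian γ m ξ) ≤ g ξ := by
    intro ξ
    have hw : (1 + ξ^2) ^ (-s) ≤ 1 :=
      Real.rpow_le_one_of_one_le_of_nonpos (by nlinarith [sq_nonneg ξ]) (by linarith)
    have hLL : 0 ≤ lorentzian γ n ξ * lorentzian γ m ξ :=
      mul_nonneg (lorentzian_nonneg hγ n ξ) (lorentzian_nonneg hγ m ξ)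
    refine le_trans (mul_le_of_le_one_left hLL hw) ?_
    have hA0 : 0 < (ξ + (n:ℝ)^2)^2 + (γ * (n:ℝ)^2)^2 :=
      add_pos_of_nonneg_of_pos (sq_nonneg _) (by positivity)
    have hB0 : 0 < (ξ + (m:ℝ)^2)^2 + (γ * (m:ℝ)^2)^2 :=
      add_pos_of_nonneg_of_pos (sq_nonneg _) (by positivity)
    have key : ((m:ℝ)^2 - (n:ℝ)^2)^2
        ≤ 2*(((ξ + (n:ℝ)^2)^2 + (γ * (n:ℝ)^2)^2) + ((ξ + (m:ℝ)^2)^2 + (γ * (m:ℝ)^2)^2)) := by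
      nlinarith [sq_nonneg ((ξ + (n:ℝ)^2) + (ξ + (m:ℝ)^2)), sq_nonneg (γ * (n:ℝ)^2),
        sq_nonneg (γ * (m:ℝ)^2)]
    simp only [hg, hD, lorentzian]
    exact prod_bound_real hγ hN0 hM0 hA0 hB0 hD0 key
  have hpos : ∀ ξ : ℝ, 0 ≤ (1 + ξ^2) ^ (-s) * (lorentzian γ n ξ * lorentzian γ m ξ) := by
    intro ξ
    exact mul_nonneg (Real.rpow_nonneg (by positivity) _)
      (mul_nonneg (lorentzian_nonneg hγ n ξ) (lorentzian_nonneg hγ m ξ))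
  have hle : ∫ ξ : ℝ, (1 + ξ^2) ^ (-s) * (lorentzian γ n ξ * lorentzian γ m ξ)
      ≤ ∫ ξ : ℝ, g ξ :=
    integral_mono_of_nonneg (Filter.Eventually.of_forall hpos) hg_int
      (Filter.Eventually.of_forall hpt)
  have hgval : ∫ ξ : ℝ, g ξ = (2*γ/D^2) * ((m:ℝ)^2 * π + (n:ℝ)^2 * π) := by
    rw [hg]
    rw [MeasureTheory.integral_const_mul]
    rw [MeasureTheory.integral_add (hInt_n.const_mul _) (hInt_m.const_mul _)]
    rw [MeasureTheory.integral_const_mul, MeasureTheory.integral_const_mul,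
      lorentzian_integral hγ hn, lorentzian_integral hγ hm]
  refine hle.trans ?_
  rw [hgval]
  have hMN2 : 0 < ((m:ℝ) - (n:ℝ))^2 := pow_pos (by linarith) 2
  rw [div_mul_eq_mul_div, div_le_div_iff₀ hD2 hMN2]
  have hkey : ((m:ℝ)^2 + (n:ℝ)^2) ≤ 2*((m:ℝ)+(n:ℝ))^2 := by nlinarith [mul_pos hN0 hM0]
  have e3 : 2*γ*((m:ℝ)^2 * π + (n:ℝ)^2 * π)*((m:ℝ) - (n:ℝ))^2
      = (2*γ*π*((m:ℝ) - (n:ℝ))^2) * ((m:ℝ)^2 + (n:ℝ)^2) := by ring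
  have e4 : 4*π*γ*D^2 = (2*γ*π*((m:ℝ) - (n:ℝ))^2) * (2*((m:ℝ)+(n:ℝ))^2) := by
    rw [hD]; ring
  rw [e3, e4]
  exact mul_le_mul_of_nonneg_left hkey (by positivity)

/-- partial sums of `1/k²` over naturals are at most `2 - 1/(K+1)`. -/
lemma nat_sq_sum_range (K : ℕ) :
    ∑ k ∈ Finset.range (K+2), (1:ℝ)/(k:ℝ)^2 ≤ 2 - 1/((K:ℝ)+1) := by
  induction K with
  | zero =>
    rw [Finset.sum_range_succ, Finset.sum_range_succ]
    norm_num
  | succ K ih =>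
    rw [Finset.sum_range_succ]
    have hK0 : (0:ℝ) ≤ (K:ℝ) := Nat.cast_nonneg K
    have h1 : (1:ℝ)/(((K+2:ℕ)):ℝ)^2 ≤ 1/((K:ℝ)+1) - 1/((K:ℝ)+2) := by
      have h2 : 1/((K:ℝ)+1) - 1/((K:ℝ)+2) = 1/(((K:ℝ)+1)*((K:ℝ)+2)) := by
        rw [div_sub_div _ _ (by positivity) (by positivity)]
        norm_num
      push_cast
      rw [h2, div_le_div_iff₀ (by positivity) (by positivity)]
      nlinarith
    have h3 : ((K+1:ℕ):ℝ) + 1 = (K:ℝ) + 2 := by push_cast; ring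
    rw [h3]
    push_cast at h1 ⊢
    linarith

lemma nat_sq_sum (v : Finset ℕ) : ∑ k ∈ v, (1:ℝ)/(k:ℝ)^2 ≤ 2 := by
  have hsub : v ⊆ Finset.range (v.sup id + 2) := by
    intro k hk
    simp only [Finset.mem_range]
    have h := Finset.le_sup (f := id) hk
    simp only [id] at h
    omega
  calc ∑ k ∈ v, (1:ℝ)/(k:ℝ)^2
      ≤ ∑ k ∈ Finset.range (v.sup id + 2), (1:ℝ)/(k:ℝ)^2 :=
        Finset.sum_le_sum_of_subset_of_nonneg hsub (fun i _ _ => by positivity)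
    _ ≤ 2 - 1/(((v.sup id : ℕ):ℝ) + 1) := nat_sq_sum_range _
    _ ≤ 2 := by
        have h : (0:ℝ) < ((v.sup id : ℕ):ℝ) + 1 := by positivity
        have := one_div_pos.mpr h
        linarith

/-- sums of `1/k²` over any finite set of integers are at most 4. -/
lemma int_sq_sum (v : Finset ℤ) : ∑ k ∈ v, (1:ℝ)/(k:ℝ)^2 ≤ 4 := by
  classical
  rw [← Finset.sum_filter_add_sum_filter_not v (fun k => 0 < k)]
  have hpos : ∑ k ∈ v.filter (fun k => 0 < k), (1:ℝ)/(k:ℝ)^2 ≤ 2 := by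
    have himg : ∑ j ∈ (v.filter (fun k => 0 < k)).image Int.toNat, (1:ℝ)/((j:ℕ):ℝ)^2
        = ∑ k ∈ v.filter (fun k => 0 < k), (1:ℝ)/(((k.toNat:ℕ)):ℝ)^2 := by
      refine Finset.sum_image ?_
      intro x hx y hy hxy
      simp only [Finset.mem_coe, Finset.mem_filter] at hx hy
      omega
    have heq : ∑ k ∈ v.filter (fun k => 0 < k), (1:ℝ)/(((k.toNat:ℕ)):ℝ)^2
        = ∑ k ∈ v.filter (fun k => 0 < k), (1:ℝ)/(k:ℝ)^2 := by
      refine Finset.sum_congr rfl ?_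
      intro k hk
      simp only [Finset.mem_filter] at hk
      have h : ((k.toNat : ℕ) : ℝ) = (k : ℝ) := by exact_mod_cast Int.toNat_of_nonneg hk.2.le
      rw [h]
    rw [← heq, ← himg]
    exact nat_sq_sum _
  have hneg : ∑ k ∈ v.filter (fun k => ¬ 0 < k), (1:ℝ)/(k:ℝ)^2 ≤ 2 := by
    have himg : ∑ j ∈ (v.filter (fun k => ¬ 0 < k)).image (fun k => (-k).toNat),
          (1:ℝ)/((j:ℕ):ℝ)^2
        = ∑ k ∈ v.filter (fun k => ¬ 0 < k), (1:ℝ)/((((-k).toNat:ℕ)):ℝ)^2 := by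
      refine Finset.sum_image ?_
      intro x hx y hy hxy
      simp only [Finset.mem_coe, Finset.mem_filter] at hx hy
      simp only at hxy
      omega
    have heq : ∑ k ∈ v.filter (fun k => ¬ 0 < k), (1:ℝ)/((((-k).toNat:ℕ)):ℝ)^2
        = ∑ k ∈ v.filter (fun k => ¬ 0 < k), (1:ℝ)/(k:ℝ)^2 := by
      refine Finset.sum_congr rfl ?_
      intro k hk
      simp only [Finset.mem_filter] at hk
      have h1 : (((-k).toNat : ℕ) : ℝ) = ((-k : ℤ) : ℝ) := by
        exact_mod_cast Int.toNat_of_nonneg (by omega)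
      rw [h1]
      push_cast
      ring_nf
    rw [← heq, ← himg]
    exact nat_sq_sum _
  linarith

end aux

/-- Cross-term summability for Lorentzians at intermediate frequencies: there exist
`s ∈ (1/4, 1/2)`, `η > 0`, and `C > 0` such that for every `γ ∈ (0,1)`, the sum over
pairs of integers `γ^{-1/2+η} < n < m < γ^{-1/2-η}` of
`∫ (1+ξ²)^{-s} L_{γ,n}(ξ) L_{γ,m}(ξ) dξ` is at most `C`. -/
theorem stmt11 :
    ∃ s ∈ Set.Ioo (1/4 : ℝ) (1/2), ∃ η > (0:ℝ), ∃ C > (0:ℝ),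
      ∀ (γ : ℝ), γ ∈ Set.Ioo (0:ℝ) 1 →
        (∑' p : {p : ℤ × ℤ //
            γ ^ (-(1:ℝ)/2 + η) < (p.1 : ℝ) ∧ p.1 < p.2 ∧ (p.2 : ℝ) < γ ^ (-(1:ℝ)/2 - η)},
          ∫ ξ : ℝ, (1 + ξ^2) ^ (-s) * (lorentzian γ p.1.1 ξ * lorentzian γ p.1.2 ξ))
          ≤ C := by
  classical
  refine ⟨1/3, ⟨by norm_num, by norm_num⟩, 1/4, by norm_num, 32 * Real.pi,
    by positivity, ?_⟩
  rintro γ ⟨hγ0, hγ1⟩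
  set η : ℝ := 1/4 with hη
  -- lower threshold is > 1
  have hlow : (1:ℝ) < γ ^ (-(1:ℝ)/2 + η) := by
    refine (Real.one_lt_rpow_iff_of_pos hγ0).mpr (Or.inr ⟨hγ1, by norm_num [hη]⟩)
  set M : ℤ := ⌈γ ^ (-(1:ℝ)/2 - η)⌉ with hMdef
  -- the ceiling is at least 1
  have hup : (1:ℝ) < γ ^ (-(1:ℝ)/2 - η) := by
    refine (Real.one_lt_rpow_iff_of_pos hγ0).mpr (Or.inr ⟨hγ1, by norm_num [hη]⟩)
  have hM1 : 1 ≤ M := by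
    have h1 := Int.le_ceil (γ ^ (-(1:ℝ)/2 - η))
    have h2 : (1:ℝ) < (M:ℝ) := lt_of_lt_of_le hup h1
    exact_mod_cast h2.le
  refine tsum_le_of_sum_le' (by positivity) ?_
  intro u
  -- bound each term
  have hterm : ∀ p : {p : ℤ × ℤ //
      γ ^ (-(1:ℝ)/2 + η) < (p.1 : ℝ) ∧ p.1 < p.2 ∧ (p.2 : ℝ) < γ ^ (-(1:ℝ)/2 - η)},
      (∫ ξ : ℝ, (1 + ξ^2) ^ (-(1/3:ℝ)) * (lorentzian γ p.1.1 ξ * lorentzian γ p.1.2 ξ))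
        ≤ 4 * Real.pi * γ * (1/((p.1.2:ℝ) - (p.1.1:ℝ))^2) := by
    intro p
    obtain ⟨h1, h2, h3⟩ := p.2
    have hn1 : 1 ≤ p.1.1 := by
      have h4 : (1:ℝ) < (p.1.1:ℝ) := lt_trans hlow h1
      exact_mod_cast h4.le
    have h5 := term_bound hγ0 (by norm_num : (0:ℝ) ≤ 1/3) hn1 h2
    calc (∫ ξ : ℝ, (1 + ξ^2) ^ (-(1/3:ℝ)) * (lorentzian γ p.1.1 ξ * lorentzian γ p.1.2 ξ))
        ≤ 4 * Real.pi * γ / ((p.1.2:ℝ) - (p.1.1:ℝ))^2 := h5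
      _ = 4 * Real.pi * γ * (1/((p.1.2:ℝ) - (p.1.1:ℝ))^2) := by ring
  refine le_trans (Finset.sum_le_sum (fun p _ => hterm p)) ?_
  rw [← Finset.mul_sum]
  -- pass to the image in ℤ × ℤ
  have himg : ∑ q ∈ u.image Subtype.val, (1:ℝ)/((q.2:ℝ) - (q.1:ℝ))^2
      = ∑ p ∈ u, (1:ℝ)/((p.1.2:ℝ) - (p.1.1:ℝ))^2 :=
    Finset.sum_image (fun x _ y _ h => Subtype.coe_injective h)
  rw [← himg]
  -- the image lies in a box
  have hsub : u.image Subtype.val ⊆ Finset.Icc 1 M ×ˢ Finset.Icc 1 M := by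
    intro q hq
    obtain ⟨p, _, rfl⟩ := Finset.mem_image.mp hq
    obtain ⟨h1, h2, h3⟩ := p.2
    have hn1 : 1 ≤ p.1.1 := by
      have h4 : (1:ℝ) < (p.1.1:ℝ) := lt_trans hlow h1
      exact_mod_cast h4.le
    have hmM : p.1.2 ≤ M := by
      have h4 : ((p.1.2):ℝ) < (M:ℝ) := lt_of_lt_of_le h3 (Int.le_ceil _)
      exact_mod_cast h4.le
    simp only [Finset.mem_product, Finset.mem_Icc]
    exact ⟨⟨hn1, le_trans h2.le hmM⟩, ⟨le_trans hn1 h2.le, hmM⟩⟩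
  have hbox : ∑ q ∈ u.image Subtype.val, (1:ℝ)/((q.2:ℝ) - (q.1:ℝ))^2
      ≤ ∑ q ∈ Finset.Icc 1 M ×ˢ Finset.Icc 1 M, (1:ℝ)/((q.2:ℝ) - (q.1:ℝ))^2 :=
    Finset.sum_le_sum_of_subset_of_nonneg hsub (fun q _ _ => by positivity)
  have hboxval : ∑ q ∈ Finset.Icc 1 M ×ˢ Finset.Icc 1 M, (1:ℝ)/((q.2:ℝ) - (q.1:ℝ))^2
      ≤ 4 * (M:ℝ) := by
    rw [Finset.sum_product]
    have hinner : ∀ x ∈ Finset.Icc 1 M,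
        ∑ y ∈ Finset.Icc 1 M, (1:ℝ)/((y:ℝ) - (x:ℝ))^2 ≤ 4 := by
      intro x _
      have hre : ∑ y ∈ Finset.Icc 1 M, (1:ℝ)/((y:ℝ) - (x:ℝ))^2
          = ∑ k ∈ (Finset.Icc 1 M).image (fun y => y - x), (1:ℝ)/((k:ℝ))^2 := by
        rw [Finset.sum_image (fun a _ b _ h => sub_left_injective h)]
        refine Finset.sum_congr rfl (fun y _ => ?_)
        push_cast
        ring
      rw [hre]
      exact int_sq_sum _
    calc ∑ x ∈ Finset.Icc 1 M, ∑ y ∈ Finset.Icc 1 M, (1:ℝ)/((y:ℝ) - (x:ℝ))^2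
        ≤ ∑ _x ∈ Finset.Icc 1 M, (4:ℝ) := Finset.sum_le_sum hinner
      _ = ((Finset.Icc 1 M).card : ℝ) * 4 := by rw [Finset.sum_const]; ring
      _ = 4 * (M:ℝ) := by
          have h0 : M + 1 - 1 = M := by ring
          rw [Int.card_Icc, h0]
          have h2 : ((M.toNat : ℤ)) = M := Int.toNat_of_nonneg (by omega)
          have h3 : ((M.toNat : ℕ) : ℝ) = (M : ℝ) := by exact_mod_cast h2
          rw [h3]
          ring
  -- final numeric bound
  have hγM : γ * (M:ℝ) ≤ 2 := by
    have h1 : (M:ℝ) < γ ^ (-(1:ℝ)/2 - η) + 1 := Int.ceil_lt_add_one _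
    have h2 : γ * γ ^ (-(1:ℝ)/2 - η) = γ ^ ((1:ℝ)/4) := by
      rw [show γ * γ ^ (-(1:ℝ)/2 - η) = γ ^ (1:ℝ) * γ ^ (-(1:ℝ)/2 - η) from by
        rw [Real.rpow_one], ← Real.rpow_add hγ0]
      norm_num [hη]
    have h3 : γ ^ ((1:ℝ)/4) ≤ 1 := Real.rpow_le_one hγ0.le hγ1.le (by norm_num)
    nlinarith [Real.rpow_nonneg hγ0.le (-(1:ℝ)/2 - η)]
  calc 4 * Real.pi * γ * ∑ q ∈ u.image Subtype.val, (1:ℝ)/((q.2:ℝ) - (q.1:ℝ))^2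
      ≤ 4 * Real.pi * γ * (4 * (M:ℝ)) := by
        refine mul_le_mul_of_nonneg_left (le_trans hbox hboxval) (by positivity)
    _ = 16 * Real.pi * (γ * (M:ℝ)) := by ring
    _ ≤ 16 * Real.pi * 2 := by
        refine mul_le_mul_of_nonneg_left hγM (by positivity)
    _ = 32 * Real.pi := by ring
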